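/- arXiv:math/0304295 — 2 statements merged into one kernel-verified Lean document; each statement's English description precedes it below -/
import Mathlib

section
/- With the hypotheses of the decomposition above, the quantity dim V0 − dim V1 is independent of the choice of decomposition: if D = L ⊕ L' and D = M ⊕ M' are two such decompositions with finite dimensional pieces V0, V1 and U0, U1 respectively, then dim V0 − dim V1 = dim U0 − dim U1. -/
open Module LinearMap

theorem index_aux
    {k : Type*} [Field k]
    {E0 E1 V0 W0 V1 W1 : Type*}
    [AddCommGroup E0] [Module k E0] [AddCommGroup E1] [Module k E1]
    [AddCommGroup V0] [Module k V0] [AddCommGroup W0] [Module k W0]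
    [AddCommGroup V1] [Module k V1] [AddCommGroup W1] [Module k W1]
    [FiniteDimensional k V0] [FiniteDimensional k V1]
    (D : E0 →ₗ[k] E1)
    (e0 : E0 ≃ₗ[k] V0 × W0) (e1 : E1 ≃ₗ[k] V1 × W1)
    (L : V0 →ₗ[k] V1) (L' : W0 ≃ₗ[k] W1)
    (hL : (e1 : E1 →ₗ[k] V1 × W1) ∘ₗ D ∘ₗ (e0.symm : V0 × W0 →ₗ[k] E0) =
      LinearMap.prodMap L (L' : W0 →ₗ[k] W1)) :
    finrank k V0 + finrank k (E1 ⧸ LinearMap.range D) =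
      finrank k V1 + finrank k (LinearMap.ker D) := by
  set C : V0 × W0 →ₗ[k] V1 × W1 :=
    (e1 : E1 →ₗ[k] V1 × W1) ∘ₗ D ∘ₗ (e0.symm : V0 × W0 →ₗ[k] E0) with hC
  have hCapp : ∀ x : V0 × W0, C x = e1 (D (e0.symm x)) := fun x => rfl
  -- kernel of C
  have hkerC : LinearMap.ker C = (LinearMap.ker L).prod ⊥ := by
    rw [hL, LinearMap.ker_prodMap, LinearEquiv.ker]
  have hkerC' : LinearMap.ker C
      = Submodule.map (e0 : E0 →ₗ[k] V0 × W0) (LinearMap.ker D) := by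
    ext x
    simp only [LinearMap.mem_ker, hCapp, Submodule.mem_map, LinearMap.mem_ker,
      EmbeddingLike.map_eq_zero_iff, LinearEquiv.coe_coe]
    constructor
    · intro h
      exact ⟨e0.symm x, h, by simp⟩
    · rintro ⟨y, hy, rfl⟩
      simpa using hy
  -- range of C
  have hrangeC : LinearMap.range C = (LinearMap.range L).prod ⊤ := by
    ext z
    obtain ⟨x, y⟩ := z
    simp only [hL, LinearMap.mem_range, Submodule.mem_prod, Submodule.mem_top, and_true,
      LinearMap.prodMap_apply, Prod.mk.injEq, Prod.exists, LinearEquiv.coe_coe]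
    constructor
    · rintro ⟨a, b, h1, h2⟩
      exact ⟨a, h1⟩
    · rintro ⟨a, h1⟩
      exact ⟨a, L'.symm y, h1, by simp⟩
  have hrangeC' : LinearMap.range C
      = Submodule.map (e1 : E1 →ₗ[k] V1 × W1) (LinearMap.range D) := by
    ext z
    simp only [LinearMap.mem_range, hCapp, Submodule.mem_map, LinearEquiv.coe_coe]
    constructor
    · rintro ⟨x, rfl⟩
      exact ⟨D (e0.symm x), ⟨e0.symm x, rfl⟩, rfl⟩
    · rintro ⟨y, ⟨x, rfl⟩, rfl⟩
      exact ⟨e0 x, by simp⟩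
  -- finrank ker D = finrank ker L
  have hk : finrank k (LinearMap.ker D) = finrank k (LinearMap.ker L) := by
    have h1 : finrank k (LinearMap.ker D)
        = finrank k (Submodule.map (e0 : E0 →ₗ[k] V0 × W0) (LinearMap.ker D)) :=
      (e0.submoduleMap (LinearMap.ker D)).finrank_eq
    have h3 : finrank k ((LinearMap.ker L).prod (⊥ : Submodule k W0))
        = finrank k (LinearMap.ker L) := by
      rw [← Submodule.map_inl]
      exact ((Submodule.equivMapOfInjective _ (LinearMap.inl_injective)
        (LinearMap.ker L)).finrank_eq).symm
    rw [h1, ← hkerC', hkerC, h3]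
  -- finrank coker D = finrank coker L
  have hc : finrank k (E1 ⧸ LinearMap.range D)
      = finrank k (V1 ⧸ LinearMap.range L) := by
    have h1 : (E1 ⧸ LinearMap.range D) ≃ₗ[k] (V1 × W1) ⧸ LinearMap.range C :=
      Submodule.Quotient.equiv _ _ e1 hrangeC'.symm
    let q : V1 × W1 →ₗ[k] V1 ⧸ LinearMap.range L :=
      (LinearMap.range L).mkQ ∘ₗ LinearMap.fst k V1 W1
    have hq : LinearMap.ker q = (LinearMap.range L).prod ⊤ := by
      rw [LinearMap.ker_comp, Submodule.ker_mkQ, Submodule.comap_fst]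
    have hqs : Function.Surjective q :=
      (Submodule.mkQ_surjective _).comp Prod.fst_surjective
    have h2 : ((V1 × W1) ⧸ LinearMap.range C) ≃ₗ[k] V1 ⧸ LinearMap.range L :=
      (Submodule.quotEquivOfEq _ _ (hrangeC.trans hq.symm)).trans
        (q.quotKerEquivOfSurjective hqs)
    exact (h1.trans h2).finrank_eq
  have rn : finrank k (LinearMap.range L) + finrank k (LinearMap.ker L) = finrank k V0 :=
    L.finrank_range_add_finrank_ker
  have qf : finrank k (V1 ⧸ LinearMap.range L) + finrank k (LinearMap.range L)
      = finrank k V1 := Submodule.finrank_quotient_add_finrank _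
  rw [hk, hc]
  omega

/-- Well-definedness of the index: if `D : E0 → E1` admits two block-diagonal
decompositions `D = L ⊕ L'` (w.r.t. splittings `E0 ≃ V0 × W0`, `E1 ≃ V1 × W1`) and
`D = M ⊕ M'` (w.r.t. `E0 ≃ U0 × X0`, `E1 ≃ U1 × X1`), with `V0, V1, U0, U1` finite
dimensional and `L', M'` isomorphisms, then `dim V0 - dim V1 = dim U0 - dim U1`. -/
theorem index_well_defined
    {k : Type*} [Field k]
    {E0 E1 V0 W0 V1 W1 U0 X0 U1 X1 : Type*}
    [AddCommGroup E0] [Module k E0] [AddCommGroup E1] [Module k E1]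
    [AddCommGroup V0] [Module k V0] [AddCommGroup W0] [Module k W0]
    [AddCommGroup V1] [Module k V1] [AddCommGroup W1] [Module k W1]
    [AddCommGroup U0] [Module k U0] [AddCommGroup X0] [Module k X0]
    [AddCommGroup U1] [Module k U1] [AddCommGroup X1] [Module k X1]
    [FiniteDimensional k V0] [FiniteDimensional k V1]
    [FiniteDimensional k U0] [FiniteDimensional k U1]
    (D : E0 →ₗ[k] E1)
    (e0 : E0 ≃ₗ[k] V0 × W0) (e1 : E1 ≃ₗ[k] V1 × W1)
    (f0 : E0 ≃ₗ[k] U0 × X0) (f1 : E1 ≃ₗ[k] U1 × X1)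
    (L : V0 →ₗ[k] V1) (L' : W0 ≃ₗ[k] W1)
    (M : U0 →ₗ[k] U1) (M' : X0 ≃ₗ[k] X1)
    (hL : (e1 : E1 →ₗ[k] V1 × W1) ∘ₗ D ∘ₗ (e0.symm : V0 × W0 →ₗ[k] E0) =
      LinearMap.prodMap L (L' : W0 →ₗ[k] W1))
    (hM : (f1 : E1 →ₗ[k] U1 × X1) ∘ₗ D ∘ₗ (f0.symm : U0 × X0 →ₗ[k] E0) =
      LinearMap.prodMap M (M' : X0 →ₗ[k] X1)) :
    (Module.finrank k V0 : ℤ) - Module.finrank k V1 =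
      (Module.finrank k U0 : ℤ) - Module.finrank k U1 := by
  have h1 := index_aux D e0 e1 L L' hL
  have h2 := index_aux D f0 f1 M M' hM
  omega
end

section
/- Let D : E0 → E1 be a linear map admitting a decomposition D = L ⊕ L' with L : V0 → V1 between finite dimensional spaces and L' : W0 → W1 an isomorphism. Then there exists a decomposition of D in which V0 = ker D, the finite dimensional block map is zero, and V1 is isomorphic to coker D. -/
lemma prod_isCompl {k M N : Type*} [Field k] [AddCommGroup M] [Module k M]
    [AddCommGroup N] [Module k N] {p p' : Submodule k M} {q q' : Submodule k N}
    (h : IsCompl p p') (h' : IsCompl q q') : IsCompl (p.prod q) (p'.prod q') := by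
  constructor
  · rw [disjoint_iff]
    ext ⟨x, y⟩
    simp only [Submodule.mem_inf, Submodule.mem_prod, Submodule.mem_bot, Prod.mk_eq_zero]
    constructor
    · rintro ⟨⟨h1, h2⟩, h3, h4⟩
      exact ⟨(Submodule.mem_bot k).1 (h.disjoint.le_bot (Submodule.mem_inf.2 ⟨h1, h3⟩)),
        (Submodule.mem_bot k).1 (h'.disjoint.le_bot (Submodule.mem_inf.2 ⟨h2, h4⟩))⟩
    · rintro ⟨rfl, rfl⟩
      simp
  · rw [codisjoint_iff, eq_top_iff]
    rintro ⟨x, y⟩ -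
    have hx : x ∈ p ⊔ p' := by rw [h.sup_eq_top]; trivial
    have hy : y ∈ q ⊔ q' := by rw [h'.sup_eq_top]; trivial
    obtain ⟨a, ha, b, hb, rfl⟩ := Submodule.mem_sup.1 hx
    obtain ⟨c, hc, d, hd, rfl⟩ := Submodule.mem_sup.1 hy
    exact Submodule.mem_sup.2 ⟨(a, c), ⟨ha, hc⟩, (b, d), ⟨hb, hd⟩, rfl⟩

lemma map_prodMap_prod {k M N M' N' : Type*} [Field k] [AddCommGroup M] [Module k M]
    [AddCommGroup N] [Module k N] [AddCommGroup M'] [Module k M']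
    [AddCommGroup N'] [Module k N'] (f : M →ₗ[k] M') (g : N →ₗ[k] N')
    (p : Submodule k M) (q : Submodule k N) :
    Submodule.map (LinearMap.prodMap f g) (p.prod q) = (p.map f).prod (q.map g) := by
  ext ⟨x, y⟩
  simp only [Submodule.mem_map, Submodule.mem_prod, Prod.ext_iff, LinearMap.prodMap_apply]
  constructor
  · rintro ⟨⟨a, b⟩, ⟨ha, hb⟩, h1, h2⟩
    exact ⟨⟨a, ha, h1⟩, ⟨b, hb, h2⟩⟩
  · rintro ⟨⟨a, ha, h1⟩, ⟨b, hb, h2⟩⟩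
    exact ⟨(a, b), ⟨ha, hb⟩, h1, h2⟩

lemma map_compl_eq_range {k M M' : Type*} [Field k] [AddCommGroup M] [Module k M]
    [AddCommGroup M'] [Module k M'] (f : M →ₗ[k] M') {C : Submodule k M}
    (hC : IsCompl (LinearMap.ker f) C) : Submodule.map f C = LinearMap.range f := by
  refine le_antisymm (LinearMap.map_le_range) ?_
  rw [LinearMap.range_eq_map, ← hC.sup_eq_top, Submodule.map_sup]
  have : Submodule.map f (LinearMap.ker f) = ⊥ := by
    ext x; simp only [Submodule.mem_map, LinearMap.mem_ker, Submodule.mem_bot]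
    constructor
    · rintro ⟨a, ha, rfl⟩; exact ha
    · rintro rfl; exact ⟨0, by simp⟩
  rw [this, bot_sup_eq]

/-- If `D = L ⊕ L'` with `L` between finite dimensional spaces and `L'` an isomorphism,
then `D` admits a decomposition in which the finite dimensional summand of the source is
`ker D`, the finite dimensional block map is zero (i.e. `D` kills `ker D` and carries the
complement `W0'` isomorphically onto a complement `W1'` of `V1'`), and `V1'` is isomorphic
to `coker D`. -/
theorem kuranishi_decomposition
    {k : Type*} [Field k]
    {V0 W0 V1 W1 : Type*}
    [AddCommGroup V0] [Module k V0] [AddCommGroup W0] [Module k W0]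
    [AddCommGroup V1] [Module k V1] [AddCommGroup W1] [Module k W1]
    [FiniteDimensional k V0] [FiniteDimensional k V1]
    (L : V0 →ₗ[k] V1) (L' : W0 ≃ₗ[k] W1)
    (D : (V0 × W0) →ₗ[k] (V1 × W1))
    (hD : D = LinearMap.prodMap L (L' : W0 →ₗ[k] W1)) :
    ∃ (W0' : Submodule k (V0 × W0)) (V1' W1' : Submodule k (V1 × W1)),
      IsCompl (LinearMap.ker D) W0' ∧
      IsCompl V1' W1' ∧
      Submodule.map D W0' = W1' ∧
      Nonempty (V1' ≃ₗ[k] ((V1 × W1) ⧸ LinearMap.range D)) := by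
  obtain ⟨C, hC⟩ := Submodule.exists_isCompl (LinearMap.ker L)
  obtain ⟨J, hJ⟩ := Submodule.exists_isCompl (LinearMap.range L)
  have hker : LinearMap.ker D = (LinearMap.ker L).prod ⊥ := by
    rw [hD, LinearMap.ker_prodMap, LinearEquiv.ker]
  refine ⟨C.prod ⊤, J.prod ⊥, (LinearMap.range L).prod ⊤, ?_, ?_, ?_, ?_⟩
  · rw [hker]
    exact prod_isCompl hC isCompl_bot_top
  · exact prod_isCompl hJ.symm isCompl_top_bot.symm
  · rw [hD, map_prodMap_prod, map_compl_eq_range L hC, Submodule.map_top, LinearEquiv.range]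
  · have hrange : LinearMap.range D = (LinearMap.range L).prod ⊤ := by
      rw [hD, LinearMap.range_eq_map, ← Submodule.prod_top, map_prodMap_prod]
      simp [Submodule.map_top, LinearEquiv.range]
    rw [hrange]
    have h : IsCompl ((LinearMap.range L).prod (⊤ : Submodule k W1)) (J.prod ⊥) :=
      prod_isCompl hJ isCompl_top_bot
    exact ⟨(Submodule.quotientEquivOfIsCompl _ _ h).symm⟩
end
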